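/- Let μ : {1,2,3,…} → {0,1} be a 0-1 word and let F be a nonempty finite subset of ℕ (the vertex set of G_μ). If the subgraph of G_μ induced on F is prime, then F ∖ {min F} is an interval of ℕ, i.e., a set of consecutive integers. -/

import Mathlib

/-- Adjacency rule of the graph associated with a 0-1 word `μ` (letters indexed from 1):
for `i < j`, `{i,j}` is an edge iff (`μ j = 1` and `j = i+1`) or (`μ j = 0` and `j ≠ i+1`). -/
def GmuAdj (μ : ℕ → Bool) (i j : ℕ) : Prop :=
  (i < j ∧ ((μ j = true ∧ j = i + 1) ∨ (μ j = false ∧ j ≠ i + 1))) ∨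
  (j < i ∧ ((μ i = true ∧ i = j + 1) ∨ (μ i = false ∧ i ≠ j + 1)))

/-- The graph `G_μ` on `ℕ` associated with the 0-1 word `μ : {1,2,…} → {0,1}`. -/
def Gmu (μ : ℕ → Bool) : SimpleGraph ℕ where
  Adj i j := GmuAdj μ i j
  symm := ⟨fun i j h => Or.symm h⟩
  loopless := ⟨fun i h => by
    rcases h with ⟨h1, _⟩ | ⟨h1, _⟩ <;> exact lt_irrefl i h1⟩

/-- Adjacency rule for the graph of a finite 0-1 word `w = w₁…wₙ` on vertices `{0,…,n}`. -/
def GWAdj (w : List Bool) (i j : ℕ) : Prop :=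
  (i < j ∧ ((w.getD (j - 1) false = true ∧ j = i + 1) ∨
            (w.getD (j - 1) false = false ∧ j ≠ i + 1))) ∨
  (j < i ∧ ((w.getD (i - 1) false = true ∧ i = j + 1) ∨
            (w.getD (i - 1) false = false ∧ i ≠ j + 1)))

/-- The graph `G_w` of a finite 0-1 word `w = w₁…wₙ`, on the vertex set `{0,1,…,n}`. -/
def GW (w : List Bool) : SimpleGraph (Fin (w.length + 1)) where
  Adj i j := GWAdj w i j
  symm := ⟨fun i j h => Or.symm h⟩
  loopless := ⟨fun i h => by
    rcases h with ⟨h1, _⟩ | ⟨h1, _⟩ <;> exact lt_irrefl (i : ℕ) h1⟩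

/-- `M` is a module of the graph `G`: every vertex outside `M` is adjacent either to all
vertices of `M` or to none of them. -/
def IsModule {V : Type*} (G : SimpleGraph V) (M : Set V) : Prop :=
  ∀ x ∉ M, (∀ a ∈ M, G.Adj x a) ∨ (∀ a ∈ M, ¬ G.Adj x a)

/-- A graph is prime if its only modules are the empty set, singletons and the whole
vertex set. -/
def GraphPrime {V : Type*} (G : SimpleGraph V) : Prop :=
  ∀ M : Set V, IsModule G M → M = ∅ ∨ (∃ a, M = {a}) ∨ M = Set.univ

theorem stmt11 (μ : ℕ → Bool) (F : Finset ℕ) (hF : F.Nonempty)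
    (hprime : GraphPrime ((Gmu μ).induce (↑F : Set ℕ))) :
    ∀ a b c : ℕ, a ∈ F → b ∈ F → a ≠ F.min' hF → b ≠ F.min' hF →
      a ≤ c → c ≤ b → c ∈ F := by

  intro a b c ha hb hamin hbmin hac hcb
  by_contra hc
  have hac' : a < c := lt_of_le_of_ne hac (fun h => hc (h ▸ ha))
  have hcb' : c < b := lt_of_le_of_ne hcb (fun h => hc (h ▸ hb))
  set M : Set (↑(↑F : Set ℕ)) := {x | (x : ℕ) < c} with hM
  have hmod : IsModule ((Gmu μ).induce (↑F : Set ℕ)) M := by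
    intro x hx
    have hxc : c < (x : ℕ) := by
      rcases lt_trichotomy (x : ℕ) c with h | h | h
      · exact absurd h hx
      · exact absurd (h ▸ x.2) hc
      · exact h
    have key : ∀ y : (↑F : Set ℕ), y ∈ M →
        (((Gmu μ).induce (↑F : Set ℕ)).Adj x y ↔ μ (x : ℕ) = false) := by
      intro y hy
      have hy' : (y : ℕ) < c := hy
      have hxc' : c < (x : ℕ) := hxc
      have hyx : (y : ℕ) < (x : ℕ) := lt_trans hy' hxc'
      have hne : (x : ℕ) ≠ (y : ℕ) + 1 := by omega
      rw [show (((Gmu μ).induce (↑F : Set ℕ)).Adj x y) = GmuAdj μ (x : ℕ) (y : ℕ) from rfl]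
      constructor
      · rintro (⟨h1, _⟩ | ⟨_, ⟨_, h2⟩ | ⟨h2, _⟩⟩)
        · omega
        · omega
        · exact h2
      · intro hμ
        exact Or.inr ⟨hyx, Or.inr ⟨hμ, hne⟩⟩
    cases hμx : μ (x : ℕ) with
    | false => exact Or.inl (fun y hy => (key y hy).mpr hμx)
    | true => exact Or.inr (fun y hy hadj => by have h2 := (key y hy).mp hadj; simp [hμx] at h2)
  rcases hprime M hmod with h | ⟨z, h⟩ | h
  · have : (⟨a, ha⟩ : (↑F : Set ℕ)) ∈ M := hac'
    rw [h] at this; exact this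
  · have h1 : (⟨a, ha⟩ : (↑F : Set ℕ)) ∈ M := hac'
    have hmin : F.min' hF ∈ F := F.min'_mem hF
    have h2 : (⟨F.min' hF, hmin⟩ : (↑F : Set ℕ)) ∈ M :=
      lt_of_le_of_lt (F.min'_le a ha) hac'
    rw [h] at h1 h2
    apply hamin
    have := h1.trans h2.symm
    exact congrArg Subtype.val this
  · have : (⟨b, hb⟩ : (↑F : Set ℕ)) ∈ M := h ▸ Set.mem_univ _
    exact absurd this (by simp [hM]; omega)
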